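/- If U is an open subset of a smooth manifold M obtained by removing a closed smooth submanifold of real codimension 2, then the inclusion U ↪ M induces a surjection on fundamental groups. -/

import Mathlib

/-!
STATEMENT 3: If `U` is an open subset of a smooth manifold `M` obtained by removing a
closed smooth submanifold of real codimension `2`, then the inclusion `U ↪ M` induces a
surjection on fundamental groups.

The removed submanifold is encoded as a smooth embedding `e : N → M` of a smooth
manifold `N` of dimension `m` with `m + 2 = n`, whose range is exactly the (closed)
complement `M ∖ U`.
-/

open CategoryTheory
open scoped FundamentalGroupoid Manifold

universe u

/-- The homomorphism induced by a continuous map on fundamental groups. -/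
noncomputable def inducedPi1 {X Y : Type u} [TopologicalSpace X] [TopologicalSpace Y]
    (f : C(X, Y)) (x : X) :
    Aut (FundamentalGroupoid.mk x) →* Aut (FundamentalGroupoid.mk (f x)) :=
  let F : FundamentalGroupoid X ⥤ FundamentalGroupoid Y :=
    πₘ (TopCat.ofHom f)
  F.mapAut (⟨x⟩ : FundamentalGroupoid X)

open Set Metric Module
open scoped ENNReal Topology unitInterval

attribute [local instance] Path.Homotopic.setoid

namespace Codim2Aux

section PathAlgebra

variable {X : Type*} [TopologicalSpace X]


/-- morphism class of a path in the fundamental groupoid -/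
noncomputable def cls {a b : X} (P : Path a b) :
    (⟨a⟩ : FundamentalGroupoid X) ⟶ (⟨b⟩ : FundamentalGroupoid X) := ⟦P⟧

lemma cls_trans {a b c : X} (P : Path a b) (Q : Path b c) :
    cls (P.trans Q) = cls P ≫ cls Q :=
  rfl

lemma cls_comp_symm {a b : X} (P : Path a b) :
    cls P ≫ cls P.symm = 𝟙 (⟨a⟩ : FundamentalGroupoid X) :=
  Quotient.sound ⟨(Path.Homotopy.reflTransSymm P).symm⟩

lemma homotopic_of_cls {a b : X} {P Q : Path a b} (h : cls P = cls Q) :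
    P.Homotopic Q := Quotient.exact h

lemma path_alg2 {a d b a' : X} (P : Path a d) (v : Path d b) (ρ : Path d a') :
    (P.trans v).Homotopic ((P.trans ρ).trans (ρ.symm.trans v)) := by
  apply homotopic_of_cls
  simp only [cls_trans, Category.assoc]
  rw [← Category.assoc (cls ρ), cls_comp_symm, Category.id_comp]

lemma path_alg {a c e d b a' : X} (u : Path a c) (g₁ : Path c e) (g₂ : Path e d)
    (v : Path d b) (ρ : Path e a') :
    ((u.trans (g₁.trans g₂)).trans v).Homotopic
      (((u.trans g₁).trans ρ).trans ((ρ.symm.trans g₂).trans v)) := by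
  apply homotopic_of_cls
  simp only [cls_trans, Category.assoc]
  rw [← Category.assoc (cls ρ), cls_comp_symm, Category.id_comp]


end PathAlgebra

section Halves
variable {X : Type*} [TopologicalSpace X]


noncomputable def firstHalf {c d : X} (γ : Path c d) : Path c (γ.extend (1/2)) where
  toFun t := γ.extend (t / 2)
  continuous_toFun := γ.continuous_extend.comp (by fun_prop)
  source' := by norm_num
  target' := by norm_num

noncomputable def secondHalf {c d : X} (γ : Path c d) : Path (γ.extend (1/2)) d where
  toFun t := γ.extend ((t + 1) / 2)
  continuous_toFun := γ.continuous_extend.comp (by fun_prop)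
  source' := by norm_num
  target' := by norm_num

@[simp] lemma firstHalf_apply {c d : X} (γ : Path c d) (t : I) :
    firstHalf γ t = γ.extend (t / 2) := rfl

@[simp] lemma secondHalf_apply {c d : X} (γ : Path c d) (t : I) :
    secondHalf γ t = γ.extend ((t + 1) / 2) := rfl

lemma halves_trans {c d : X} (γ : Path c d) : (firstHalf γ).trans (secondHalf γ) = γ := by
  ext t
  rw [Path.trans_apply]
  split_ifs with h
  · show γ.extend _ = _
    rw [show ((⟨2 * (t:ℝ), _⟩ : I) : ℝ) / 2 = (t:ℝ) by push_cast; ring]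
    exact γ.extend_extends' ⟨t, t.2⟩
  · show γ.extend _ = _
    rw [show (((⟨2 * (t:ℝ) - 1, _⟩ : I) : ℝ) + 1) / 2 = (t:ℝ) by push_cast; ring]
    exact γ.extend_extends' ⟨t, t.2⟩

lemma firstHalf_extend {c d : X} (γ : Path c d) {s : ℝ} (h0 : 0 ≤ s) (h1 : s ≤ 1) :
    (firstHalf γ).extend s = γ.extend (s / 2) := by
  rw [Path.extend_apply _ ⟨h0, h1⟩, firstHalf_apply]

lemma secondHalf_extend {c d : X} (γ : Path c d) {s : ℝ} (h0 : 0 ≤ s) (h1 : s ≤ 1) :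
    (secondHalf γ).extend s = γ.extend ((s + 1) / 2) := by
  rw [Path.extend_apply _ ⟨h0, h1⟩, secondHalf_apply]

lemma firstHalf_image {c d : X} (γ : Path c d) {u v : ℝ} (h0 : 0 ≤ u) (h1 : v ≤ 1) :
    (firstHalf γ).extend '' Icc u v ⊆ γ.extend '' Icc (u/2) (v/2) := by
  rintro _ ⟨s, hs, rfl⟩
  rw [firstHalf_extend γ (h0.trans hs.1) (hs.2.trans h1)]
  exact ⟨s/2, ⟨by linarith [hs.1], by linarith [hs.2]⟩, rfl⟩

lemma secondHalf_image {c d : X} (γ : Path c d) {u v : ℝ} (h0 : 0 ≤ u) (h1 : v ≤ 1) :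
    (secondHalf γ).extend '' Icc u v ⊆ γ.extend '' Icc ((u+1)/2) ((v+1)/2) := by
  rintro _ ⟨s, hs, rfl⟩
  rw [secondHalf_extend γ (h0.trans hs.1) (hs.2.trans h1)]
  exact ⟨(s+1)/2, ⟨by linarith [hs.1], by linarith [hs.2]⟩, rfl⟩

lemma range_subset_extend_image {c d : X} (γ : Path c d) :
    range γ ⊆ γ.extend '' Icc 0 1 := by
  rintro _ ⟨t, rfl⟩
  exact ⟨t, ⟨t.2.1, t.2.2⟩, γ.extend_extends' ⟨t, t.2⟩⟩


end Halves

def GoodSet {X : Type*} [TopologicalSpace X] (U V : Set X) : Prop :=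
  IsOpen V ∧ ∀ a b : X, a ∈ U → b ∈ U → ∀ δ : Path a b, Set.range δ ⊆ V →
    ∃ q : Path a b, Set.range q ⊆ U ∧ δ.Homotopic q

def Dyadic {X : Type*} [TopologicalSpace X] (U : Set X) (k : ℕ) {c d : X} (γ : Path c d) : Prop :=
  ∀ j : ℕ, j < 2^k → ∃ V, GoodSet U V ∧
    γ.extend '' Icc ((j : ℝ)/2^k) ((j+1 : ℝ)/2^k) ⊆ V

section Abstract

variable {X : Type*} [TopologicalSpace X]

theorem claim [LocallyPathConnectedSpace X] {U : Set X} (hdense : Dense U) :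
    ∀ k : ℕ, ∀ {c d : X} (γ : Path c d), Dyadic U k γ →
    ∀ {a b : X}, a ∈ U → b ∈ U → ∀ {VL VR : Set X}, GoodSet U VL → GoodSet U VR →
    ∀ (sg : Path a c) (tu : Path d b), range sg ⊆ VL → range tu ⊆ VR →
    γ.extend '' Icc 0 ((2^k : ℝ)⁻¹) ⊆ VL → γ.extend '' Icc (1 - (2^k:ℝ)⁻¹) 1 ⊆ VR →
    ∃ q : Path a b, range q ⊆ U ∧ ((sg.trans γ).trans tu).Homotopic q := by
  intro k
  induction k with
  | zero =>
    intro c d γ _ a b ha hb VL VR hVL hVR sg tu hsg htu hL hR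
    rw [pow_zero, inv_one] at hL hR
    rw [sub_self] at hR
    have hγL : range γ ⊆ VL := (range_subset_extend_image γ).trans hL
    have hγR : range γ ⊆ VR := (range_subset_extend_image γ).trans hR
    have hd : d ∈ VL ∩ VR := ⟨hγL ⟨1, γ.target⟩, hγR ⟨1, γ.target⟩⟩
    have hO : VL ∩ VR ∈ nhds d := (hVL.1.inter hVR.1).mem_nhds hd
    obtain ⟨W, ⟨hWnhds, hWpc⟩, hWsub⟩ := (path_connected_basis d).mem_iff.1 hO
    obtain ⟨a', ha'int, ha'U⟩ :=
      hdense.inter_open_nonempty (interior W) isOpen_interior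
        ⟨d, mem_interior_iff_mem_nhds.2 hWnhds⟩
    have ha'W : a' ∈ W := interior_subset ha'int
    obtain ⟨rr, hrr⟩ := hWpc.joinedIn d (mem_of_mem_nhds hWnhds) a' ha'W
    have hrrr : range rr ⊆ W := range_subset_iff.2 hrr
    obtain ⟨q₁, hq₁U, hq₁⟩ := hVL.2 a a' ha ha'U ((sg.trans γ).trans rr) (by
      rw [Path.trans_range, Path.trans_range]
      exact union_subset (union_subset hsg hγL) (hrrr.trans (hWsub.trans inter_subset_left)))
    obtain ⟨q₂, hq₂U, hq₂⟩ := hVR.2 a' b ha'U hb (rr.symm.trans tu) (by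
      rw [Path.trans_range, Path.symm_range]
      exact union_subset (hrrr.trans (hWsub.trans inter_subset_right)) htu)
    refine ⟨q₁.trans q₂, ?_, ?_⟩
    · rw [Path.trans_range]; exact union_subset hq₁U hq₂U
    · exact (path_alg2 (sg.trans γ) tu rr).trans (Path.Homotopic.hcomp hq₁ hq₂)
  | succ k IH =>
    intro c d γ hdy a b ha hb VL VR hVL hVR sg tu hsg htu hL hR
    have h2k : (1:ℕ) ≤ 2^k := Nat.one_le_two_pow
    -- good sets around the midpoint
    obtain ⟨V₁, hV₁good, hV₁⟩ := hdy (2^k - 1) (by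
      have := Nat.pow_lt_pow_right (by norm_num : 1 < 2) (Nat.lt_succ_self k)
      omega)
    obtain ⟨V₂, hV₂good, hV₂⟩ := hdy (2^k) (by
      exact Nat.pow_lt_pow_right (by norm_num : 1 < 2) (Nat.lt_succ_self k))
    have hcast : ((2^k - 1 : ℕ) : ℝ) = 2^k - 1 := by
      push_cast [Nat.cast_sub h2k]; ring
    rw [hcast] at hV₁
    push_cast at hV₂
    have hp : (0:ℝ) < 2^k := by positivity
    have hq : (0:ℝ) < 2^(k+1) := by positivity
    have h1p : (1:ℝ) ≤ 2^k := by exact_mod_cast h2k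
    have hinv1 : ((2:ℝ)^k)⁻¹ ≤ 1 := by rw [inv_le_one₀ hp]; exact h1p
    have hinvpos : (0:ℝ) < ((2:ℝ)^k)⁻¹ := by positivity
    have e1 : ((2:ℝ)^k - 1 + 1)/2^(k+1) = 1/2 := by
      rw [pow_succ]; field_simp; ring
    have e2 : ((2:ℝ)^k)/2^(k+1) = 1/2 := by
      rw [pow_succ]; field_simp
    have hmid₁ : γ.extend (1/2) ∈ V₁ := hV₁ ⟨1/2, ⟨by
      rw [div_le_div_iff₀ hq (by norm_num), pow_succ]; nlinarith, le_of_eq e1.symm⟩, rfl⟩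
    have hmid₂ : γ.extend (1/2) ∈ V₂ := hV₂ ⟨1/2, ⟨le_of_eq e2, by
      rw [div_le_div_iff₀ (by norm_num) hq, pow_succ]; nlinarith⟩, rfl⟩
    -- pick a path-connected neighborhood of the midpoint inside V₁ ∩ V₂
    have hO : V₁ ∩ V₂ ∈ nhds (γ.extend (1/2)) :=
      (hV₁good.1.inter hV₂good.1).mem_nhds ⟨hmid₁, hmid₂⟩
    obtain ⟨W, ⟨hWnhds, hWpc⟩, hWsub⟩ := (path_connected_basis (γ.extend (1/2))).mem_iff.1 hO
    obtain ⟨a', ha'int, ha'U⟩ :=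
      hdense.inter_open_nonempty (interior W) isOpen_interior
        ⟨_, mem_interior_iff_mem_nhds.2 hWnhds⟩
    have ha'W : a' ∈ W := interior_subset ha'int
    obtain ⟨rr, hrr⟩ := hWpc.joinedIn _ (mem_of_mem_nhds hWnhds) a' ha'W
    have hrrr : range rr ⊆ W := range_subset_iff.2 hrr
    -- dyadic conditions for the two halves
    have hdy₁ : Dyadic U k (firstHalf γ) := by
      intro j hj
      obtain ⟨V, hVg, hV⟩ := hdy j (lt_trans hj (Nat.pow_lt_pow_right (by norm_num) (Nat.lt_succ_self k)))
      refine ⟨V, hVg, (firstHalf_image γ (by positivity) ?_).trans ?_⟩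
      · rw [div_le_one hp]
        exact_mod_cast Nat.succ_le_of_lt hj
      · have h1 : ((j:ℝ)/2^k/2) = (j:ℝ)/2^(k+1) := by rw [pow_succ]; ring
        have h2 : (((j:ℝ)+1)/2^k/2) = ((j:ℝ)+1)/2^(k+1) := by rw [pow_succ]; ring
        rw [h1, h2]; exact hV
    have hdy₂ : Dyadic U k (secondHalf γ) := by
      intro j hj
      obtain ⟨V, hVg, hV⟩ := hdy (j + 2^k) (by rw [pow_succ]; omega)
      push_cast at hV
      refine ⟨V, hVg, (secondHalf_image γ (by positivity) ?_).trans ?_⟩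
      · rw [div_le_one hp]
        exact_mod_cast Nat.succ_le_of_lt hj
      · have h1 : ((j:ℝ)/2^k + 1)/2 = ((j:ℝ) + 2^k)/2^(k+1) := by
          rw [pow_succ]; field_simp
        have h2 : (((j:ℝ)+1)/2^k + 1)/2 = ((j:ℝ) + 2^k + 1)/2^(k+1) := by
          rw [pow_succ]; field_simp; ring
        rw [h1, h2]; exact hV
    -- the four boundary-piece conditions
    have hfirstL : (firstHalf γ).extend '' Icc 0 ((2^k:ℝ))⁻¹ ⊆ VL := by
      refine (firstHalf_image γ le_rfl hinv1).trans ?_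
      rw [zero_div, show ((2:ℝ)^k)⁻¹/2 = ((2:ℝ)^(k+1))⁻¹ by rw [pow_succ]; ring]
      exact hL
    have hfirstR : (firstHalf γ).extend '' Icc (1 - ((2^k:ℝ))⁻¹) 1 ⊆ V₁ := by
      refine (firstHalf_image γ (by nlinarith) le_rfl).trans ?_
      rw [show (1 - ((2:ℝ)^k)⁻¹)/2 = ((2:ℝ)^k - 1)/2^(k+1) by rw [pow_succ]; field_simp,
        show (1:ℝ)/2 = ((2:ℝ)^k - 1 + 1)/2^(k+1) from e1.symm]
      exact hV₁
    have hsecL : (secondHalf γ).extend '' Icc 0 ((2^k:ℝ))⁻¹ ⊆ V₂ := by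
      refine (secondHalf_image γ le_rfl hinv1).trans ?_
      rw [show ((0:ℝ)+1)/2 = ((2:ℝ)^k)/2^(k+1) by rw [e2]; norm_num,
        show (((2:ℝ)^k)⁻¹+1)/2 = ((2:ℝ)^k + 1)/2^(k+1) by rw [pow_succ]; field_simp; ring]
      exact hV₂
    have hsecR : (secondHalf γ).extend '' Icc (1 - ((2^k:ℝ))⁻¹) 1 ⊆ VR := by
      refine (secondHalf_image γ (by nlinarith) le_rfl).trans ?_
      rw [show ((1:ℝ)+1)/2 = 1 by norm_num,
        show (1 - ((2:ℝ)^k)⁻¹ + 1)/2 = 1 - ((2:ℝ)^(k+1))⁻¹ by rw [pow_succ]; field_simp; ring]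
      exact hR
    -- apply the induction hypothesis to both halves
    obtain ⟨q₁, hq₁U, hq₁⟩ := IH (firstHalf γ) hdy₁ ha ha'U hVL hV₁good sg rr hsg
      (hrrr.trans (hWsub.trans inter_subset_left)) hfirstL hfirstR
    obtain ⟨q₂, hq₂U, hq₂⟩ := IH (secondHalf γ) hdy₂ ha'U hb hV₂good hVR rr.symm tu
      (by rw [Path.symm_range]; exact hrrr.trans (hWsub.trans inter_subset_right)) htu hsecL hsecR
    refine ⟨q₁.trans q₂, by rw [Path.trans_range]; exact union_subset hq₁U hq₂U, ?_⟩
    have halg := path_alg sg (firstHalf γ) (secondHalf γ) tu rr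
    rw [halves_trans] at halg
    exact halg.trans (Path.Homotopic.hcomp hq₁ hq₂)

/-- main abstract theorem: any loop at a point of `U` is homotopic to a loop in `U`. -/
theorem exists_loop_in [LocallyPathConnectedSpace X] {U : Set X} (hdense : Dense U)
    (hgood : ∀ p : X, ∃ V, p ∈ V ∧ GoodSet U V) {x : X} (hx : x ∈ U) (p : Path x x) :
    ∃ q : Path x x, range q ⊆ U ∧ p.Homotopic q := by
  classical
  -- choose good sets
  choose Vf hVfmem hVfgood using hgood
  -- Lebesgue number for the cover of [0,1]
  obtain ⟨δ, hδ0, hδ⟩ := lebesgue_number_lemma_of_metric (s := Icc (0:ℝ) 1)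
    (c := fun y : X => p.extend ⁻¹' (Vf y)) isCompact_Icc
    (fun y => (hVfgood y).1.preimage p.continuous_extend)
    (fun t _ => mem_iUnion.2 ⟨p.extend t, hVfmem _⟩)
  obtain ⟨k, hk⟩ : ∃ k : ℕ, ((2:ℝ)^k)⁻¹ < δ := by
    obtain ⟨k, hk⟩ := pow_unbounded_of_one_lt δ⁻¹ (by norm_num : (1:ℝ) < 2)
    exact ⟨k, by rw [inv_lt_iff_one_lt_mul₀ (by positivity)]
                 calc (1:ℝ) = δ * δ⁻¹ := by field_simp
                 _ < δ * 2^k := by gcongr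
                 ⟩
  have hdy : Dyadic U k p := by
    intro j hj
    have hp : (0:ℝ) < 2^k := by positivity
    have hjk : (j:ℝ) + 1 ≤ 2^k := by exact_mod_cast Nat.succ_le_of_lt hj
    have hmem : (j:ℝ)/2^k ∈ Icc (0:ℝ) 1 := ⟨by positivity, by
      rw [div_le_one hp]; linarith [Nat.cast_nonneg (α := ℝ) j]⟩
    obtain ⟨y, hy⟩ := hδ _ hmem
    refine ⟨Vf y, hVfgood y, ?_⟩
    rintro _ ⟨s, hs, rfl⟩
    have : s ∈ Metric.ball ((j:ℝ)/2^k) δ := by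
      rw [Metric.mem_ball, Real.dist_eq, abs_of_nonneg (by linarith [hs.1])]
      have : s ≤ ((j:ℝ)+1)/2^k := hs.2
      have h1 : ((j:ℝ)+1)/2^k - (j:ℝ)/2^k = ((2:ℝ)^k)⁻¹ := by field_simp; ring
      linarith [hs.2]
    exact hy this
  -- the two extreme good sets
  have hp : (0:ℝ) < 2^k := by positivity
  have h2k : (1:ℕ) ≤ 2^k := Nat.one_le_two_pow
  obtain ⟨VL, hVLg, hVL⟩ := hdy 0 (by positivity)
  obtain ⟨VR, hVRg, hVR⟩ := hdy (2^k - 1) (by omega)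
  rw [show (((0:ℕ)):ℝ)/2^k = 0 by norm_num, show (((0:ℕ):ℝ)+1)/2^k = ((2:ℝ)^k)⁻¹ by norm_num] at hVL
  have hcast : ((2^k - 1 : ℕ) : ℝ) = 2^k - 1 := by push_cast [Nat.cast_sub h2k]; ring
  rw [hcast, show ((2:ℝ)^k - 1)/2^k = 1 - ((2:ℝ)^k)⁻¹ by field_simp,
    show ((2:ℝ)^k - 1 + 1)/2^k = 1 by field_simp; ring] at hVR
  obtain ⟨q, hqU, hq⟩ := claim hdense k p hdy hx hx hVLg hVRg (Path.refl x) (Path.refl x)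
    (by rw [Path.refl_range]; exact singleton_subset_iff.2 (hVL ⟨0, ⟨le_rfl, by positivity⟩, p.extend_zero⟩))
    (by rw [Path.refl_range]; exact singleton_subset_iff.2 (hVR ⟨1, ⟨by
        have : (0:ℝ) < ((2:ℝ)^k)⁻¹ := by positivity
        linarith, le_rfl⟩, p.extend_one⟩))
    hVL hVR
  refine ⟨q, hqU, ?_⟩
  have h1 : ((Path.refl x).trans p).Homotopic p := ⟨Path.Homotopy.reflTrans p⟩
  have h2 : (((Path.refl x).trans p).trans (Path.refl x)).Homotopic ((Path.refl x).trans p) :=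
    ⟨Path.Homotopy.transRefl _⟩
  exact (h1.symm.trans h2.symm).trans hq

end Abstract


theorem chartedSpace_locPathConnected {H : Type*} [TopologicalSpace H]
    [LocallyPathConnectedSpace H] {M : Type*} [TopologicalSpace M] [ChartedSpace H M] :
    LocallyPathConnectedSpace M := by
  let e : M → OpenPartialHomeomorph M H := chartAt H
  refine LocPathConnectedSpace.of_bases (p := fun x s => (s ∈ nhds (e x x) ∧ IsPathConnected s)
    ∧ s ⊆ (e x).target) (s := fun x s => (e x).symm '' s) (fun x => ?_) ?_
  · rw [← (e x).symm_map_nhds_eq (mem_chart_source H x)]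
    exact ((path_connected_basis (e x x)).restrict_subset
      ((e x).open_target.mem_nhds (mem_chart_target H x))).map (e x).symm
  · rintro x s ⟨⟨-, hs⟩, hsub⟩
    exact hs.image' ((e x).continuousOn_symm.mono hsub)

instance euclideanLocPathConnected (n : ℕ) : LocallyPathConnectedSpace (EuclideanSpace ℝ (Fin n)) := by
  infer_instance


noncomputable def coneMap {E : Type*} [NormedAddCommGroup E] [NormedSpace ℝ E] (a : E) :
    ℝ × E → E := fun q => a + q.1 • (q.2 - a)




variable {n m : ℕ} {M : Type u} [TopologicalSpace M]
  [ChartedSpace (EuclideanSpace ℝ (Fin n)) M] [IsManifold (𝓡 n) (⊤ : ℕ∞) M]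
  {N : Type u} [TopologicalSpace N] [ChartedSpace (EuclideanSpace ℝ (Fin m)) N]
  [IsManifold (𝓡 m) (⊤ : ℕ∞) N] {e : N → M}

theorem dimH_cone_le (he_smooth : ContMDiff (𝓡 m) (𝓡 n) (⊤ : ℕ∞) e)
    (he_emb : Topology.IsEmbedding e) (p : M) (a : EuclideanSpace ℝ (Fin n)) :
    dimH (coneMap a '' (univ ×ˢ ((chartAt (EuclideanSpace ℝ (Fin n)) p) ''
      (range e ∩ (chartAt (EuclideanSpace ℝ (Fin n)) p).source)))) ≤ (m+1 : ℕ) := by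
  set φ := chartAt (EuclideanSpace ℝ (Fin n)) p with hφ
  set S := φ '' (range e ∩ φ.source) with hSdef
  have hloc : ∀ s ∈ S, ∃ T, T ∈ 𝓝[S] s ∧ dimH (coneMap a '' (univ ×ˢ T)) ≤ (m+1:ℕ) := by
    rintro s ⟨z, ⟨⟨w, rfl⟩, hzsrc⟩, rfl⟩
    set ψ := chartAt (EuclideanSpace ℝ (Fin m)) w with hψ
    obtain ⟨O, hOopen, hOpre⟩ := he_emb.isInducing.isOpen_iff.1 ψ.open_source
    have himg : e '' ψ.source = O ∩ range e := by rw [← hOpre, image_preimage_eq_inter_range]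
    have hwO : e w ∈ O :=
      (himg ▸ mem_image_of_mem e (mem_chart_source (EuclideanSpace ℝ (Fin m)) w)).1
    set A := ψ '' (ψ.source ∩ e ⁻¹' φ.source) with hA
    have hAopen : IsOpen A := ψ.isOpen_image_of_subset_source
      (ψ.open_source.inter (φ.open_source.preimage he_smooth.continuous)) inter_subset_left
    set g : EuclideanSpace ℝ (Fin m) → EuclideanSpace ℝ (Fin n) :=
      (extChartAt (𝓡 n) p) ∘ e ∘ (extChartAt (𝓡 m) w).symm with hg
    have hgeq : ∀ y, g y = φ (e (ψ.symm y)) := fun y => rfl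
    have hgC : ContDiffOn ℝ 1 g A := by
      have h2 := (contMDiff_iff.1 he_smooth).2 w p
      refine (h2.of_le (by exact_mod_cast le_top)).mono ?_
      rintro _ ⟨u, ⟨hu1, hu2⟩, rfl⟩
      refine ⟨?_, ?_⟩
      · rw [extChartAt_target]
        simp only [modelWithCornersSelf_coe_symm, preimage_id_eq, id_eq,
          modelWithCornersSelf_coe, range_id, inter_univ]
        exact ψ.map_source hu1
      · show (extChartAt (𝓡 m) w).symm (ψ u) ∈ e ⁻¹' (extChartAt (𝓡 n) p).source
        rw [extChartAt_source]
        have : (extChartAt (𝓡 m) w).symm (ψ u) = ψ.symm (ψ u) := rfl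
        rw [this, ψ.left_inv hu1]
        exact hu2
    set T := S ∩ φ '' (O ∩ φ.source) with hT
    have hTnhds : T ∈ 𝓝[S] (φ (e w)) := by
      refine inter_mem_nhdsWithin S ?_
      exact (φ.isOpen_image_of_subset_source (hOopen.inter φ.open_source)
        inter_subset_right).mem_nhds ⟨e w, ⟨hwO, hzsrc⟩, rfl⟩
    have hTsub : T ⊆ g '' A := by
      rintro y ⟨⟨z₁, hz₁, rfl⟩, ⟨z₂, hz₂, heq⟩⟩
      have hzz : z₂ = z₁ := φ.injOn hz₂.2 hz₁.2 heq
      subst hzz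
      obtain ⟨w₁, hw₁, rfl⟩ : z₂ ∈ e '' ψ.source := by rw [himg]; exact ⟨hz₂.1, hz₁.1⟩
      exact ⟨ψ w₁, ⟨w₁, ⟨hw₁, hz₁.2⟩, rfl⟩, by rw [hgeq, ψ.left_inv hw₁]⟩
    set G : ℝ × EuclideanSpace ℝ (Fin m) → EuclideanSpace ℝ (Fin n) :=
      fun q => a + q.1 • (g q.2 - a) with hG
    have hconesub : coneMap a '' (univ ×ˢ T) ⊆ G '' (univ ×ˢ A) := by
      rintro _ ⟨⟨t, y⟩, ⟨-, hy⟩, rfl⟩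
      obtain ⟨u, hu, rfl⟩ := hTsub hy
      exact ⟨(t, u), ⟨trivial, hu⟩, rfl⟩
    have hGC : ContDiffOn ℝ 1 G (univ ×ˢ A) := by
      refine contDiffOn_const.add (ContDiffOn.smul contDiff_fst.contDiffOn ?_)
      exact (hgC.comp contDiff_snd.contDiffOn (fun q hq => hq.2)).sub contDiffOn_const
    have hlip : ∀ q ∈ (univ ×ˢ A : Set (ℝ × EuclideanSpace ℝ (Fin m))),
        ∃ C : NNReal, ∃ t ∈ 𝓝[(univ ×ˢ A : Set (ℝ × EuclideanSpace ℝ (Fin m)))] q,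
          LipschitzOnWith C G t := by
      intro q hq
      have hopen : IsOpen ((univ ×ˢ A : Set (ℝ × EuclideanSpace ℝ (Fin m)))) :=
        isOpen_univ.prod hAopen
      obtain ⟨C, t, ht, hl⟩ := (hGC.contDiffAt (hopen.mem_nhds hq)).exists_lipschitzOnWith
      exact ⟨C, t, nhdsWithin_le_nhds ht, hl⟩
    refine ⟨T, hTnhds, ?_⟩
    calc dimH (coneMap a '' (univ ×ˢ T)) ≤ dimH (G '' (univ ×ˢ A)) := dimH_mono hconesub
      _ ≤ dimH (univ ×ˢ A : Set (ℝ × EuclideanSpace ℝ (Fin m))) :=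
          dimH_image_le_of_locally_lipschitzOn hlip
      _ ≤ dimH (univ : Set (ℝ × EuclideanSpace ℝ (Fin m))) := dimH_mono (subset_univ _)
      _ = ((finrank ℝ (ℝ × EuclideanSpace ℝ (Fin m)) : ℕ) : ℝ≥0∞) :=
          Real.dimH_univ_eq_finrank _
      _ = ((m+1 : ℕ) : ℝ≥0∞) := by
          rw [finrank_prod, finrank_self, finrank_euclideanSpace_fin]
          push_cast; ring
  choose! T hTn hTd using hloc
  obtain ⟨t, hts, htc, hcov⟩ := TopologicalSpace.countable_cover_nhdsWithin hTn
  have hsub : coneMap a '' (univ ×ˢ S) ⊆ ⋃ s ∈ t, coneMap a '' (univ ×ˢ T s) := by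
    rintro _ ⟨⟨r, y⟩, ⟨-, hy⟩, rfl⟩
    obtain ⟨s, hst, hyT⟩ := mem_iUnion₂.1 (hcov hy)
    exact mem_iUnion₂.2 ⟨s, hst, ⟨(r,y), ⟨trivial, hyT⟩, rfl⟩⟩
  calc dimH (coneMap a '' (univ ×ˢ S)) ≤ dimH (⋃ s ∈ t, coneMap a '' (univ ×ˢ T s)) :=
        dimH_mono hsub
    _ = ⨆ s ∈ t, dimH (coneMap a '' (univ ×ˢ T s)) := dimH_bUnion htc _
    _ ≤ ((m+1:ℕ) : ℝ≥0∞) := iSup₂_le fun s hs => hTd s (hts hs)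



noncomputable def segPath {E : Type*} [NormedAddCommGroup E] [NormedSpace ℝ E] (x y : E) :
    Path x y where
  toFun t := x + (t:ℝ) • (y - x)
  continuous_toFun := by fun_prop
  source' := by simp
  target' := by simp

lemma segPath_mem_convex {E : Type*} [NormedAddCommGroup E] [NormedSpace ℝ E]
    {C : Set E} (hC : Convex ℝ C) {x y : E} (hx : x ∈ C) (hy : y ∈ C) (t : I) :
    segPath x y t ∈ C := by
  have h := hC hx hy (sub_nonneg.2 t.2.2) t.2.1 (by ring)
  have : (1 - (t:ℝ)) • x + (t:ℝ) • y = x + (t:ℝ) • (y - x) := by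
    rw [sub_smul, one_smul, smul_sub]; abel
  rw [this] at h
  exact h

variable {n m : ℕ} {M : Type u} [TopologicalSpace M]
  [ChartedSpace (EuclideanSpace ℝ (Fin n)) M] [IsManifold (𝓡 n) (⊤ : ℕ∞) M]
  {N : Type u} [TopologicalSpace N] [ChartedSpace (EuclideanSpace ℝ (Fin m)) N]
  [IsManifold (𝓡 m) (⊤ : ℕ∞) N] {e : N → M}


lemma subset_cone {E : Type*} [NormedAddCommGroup E] [NormedSpace ℝ E] (a : E) (S : Set E) :
    S ⊆ coneMap a '' (univ ×ˢ S) :=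
  fun s hs => ⟨(1, s), ⟨trivial, hs⟩, by simp [coneMap]⟩

lemma hlt_aux (hdim : m + 2 = n) :
    ((m+1 : ℕ) : ℝ≥0∞) < (finrank ℝ (EuclideanSpace ℝ (Fin n)) : ℝ≥0∞) := by
  rw [finrank_euclideanSpace_fin]
  exact_mod_cast (by omega : m + 1 < n)

theorem dense_compl_range (hdim : m + 2 = n) (he_smooth : ContMDiff (𝓡 m) (𝓡 n) (⊤ : ℕ∞) e)
    (he_emb : Topology.IsEmbedding e) : Dense (range e)ᶜ := by
  rw [dense_iff_inter_open]
  rintro O hO ⟨p, hp⟩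
  set φ := chartAt (EuclideanSpace ℝ (Fin n)) p with hφ
  set S := φ '' (range e ∩ φ.source) with hS
  have hdense : Dense Sᶜ := by
    refine dense_compl_of_dimH_lt_finrank (lt_of_le_of_lt ?_ (hlt_aux hdim))
    exact (dimH_mono (subset_cone (φ p) S)).trans (dimH_cone_le he_smooth he_emb p (φ p))
  obtain ⟨y, hyO, hyS⟩ := hdense.inter_open_nonempty (φ '' (O ∩ φ.source))
    (φ.isOpen_image_of_subset_source (hO.inter φ.open_source) inter_subset_right)
    ⟨φ p, mem_image_of_mem φ ⟨hp, mem_chart_source _ p⟩⟩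
  obtain ⟨z, hz, rfl⟩ := hyO
  refine ⟨z, hz.1, fun hze => hyS ⟨z, ⟨hze, hz.2⟩, rfl⟩⟩

theorem exists_goodSet (hdim : m + 2 = n) {U : Set M} (hcodim : range e = Uᶜ)
    (he_smooth : ContMDiff (𝓡 m) (𝓡 n) (⊤ : ℕ∞) e) (he_emb : Topology.IsEmbedding e) (p : M) :
    ∃ V, p ∈ V ∧ GoodSet U V := by
  classical
  set φ := chartAt (EuclideanSpace ℝ (Fin n)) p with hφ
  obtain ⟨r, hr0, hrsub⟩ := Metric.mem_nhds_iff.1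
    (φ.open_target.mem_nhds (mem_chart_target (EuclideanSpace ℝ (Fin n)) p))
  set C := ball (φ p) r with hC
  set V := φ.source ∩ φ ⁻¹' C with hV
  have hVopen : IsOpen V := φ.isOpen_inter_preimage isOpen_ball
  have hVsub : V ⊆ φ.source := inter_subset_left
  refine ⟨V, ⟨mem_chart_source _ p, by simp [hV, hC, mem_ball_self hr0]⟩, hVopen, ?_⟩
  intro a b ha hb δ hδ
  have haV : a ∈ V := hδ ⟨0, δ.source⟩
  have hbV : b ∈ V := hδ ⟨1, δ.target⟩
  set S := φ '' (range e ∩ φ.source) with hS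
  -- the path in the chart
  set δ' : Path (φ a) (φ b) :=
    { toFun := fun t => φ (δ t)
      continuous_toFun := φ.continuousOn.comp_continuous δ.continuous
        (fun t => (hδ (mem_range_self t)).1)
      source' := congrArg (φ : M → EuclideanSpace ℝ (Fin n)) δ.source
      target' := congrArg (φ : M → EuclideanSpace ℝ (Fin n)) δ.target } with hδ'
  have hδ'C : ∀ t, δ' t ∈ C := fun t => (hδ (mem_range_self t)).2
  have hamem : φ a ∉ S := by
    rintro ⟨z, hz, heq⟩
    have : z = a := φ.injOn hz.2 (hVsub haV) heq
    rw [hcodim] at hz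
    exact hz.1 (this ▸ ha)
  have hbmem : φ b ∉ S := by
    rintro ⟨z, hz, heq⟩
    have : z = b := φ.injOn hz.2 (hVsub hbV) heq
    rw [hcodim] at hz
    exact hz.1 (this ▸ hb)
  -- choose z avoiding both cones
  set K := coneMap (φ a) '' (univ ×ˢ S) ∪ coneMap (φ b) '' (univ ×ˢ S) with hK
  have hKdense : Dense Kᶜ := by
    refine dense_compl_of_dimH_lt_finrank ?_
    rw [hK, dimH_union]
    exact lt_of_le_of_lt (max_le (dimH_cone_le he_smooth he_emb p _)
      (dimH_cone_le he_smooth he_emb p _)) (hlt_aux hdim)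
  obtain ⟨z, hzC, hzK⟩ := hKdense.inter_open_nonempty C isOpen_ball
    ⟨δ' 0, hδ'C 0⟩
  -- the two segments avoid S
  have hseg1 : ∀ t : I, segPath (φ a) z t ∉ S := by
    intro t hmem
    rcases eq_or_ne (t : ℝ) 0 with h0 | h0
    · exact hamem (by simpa [segPath, h0] using hmem)
    · refine hzK (Or.inl ⟨((t:ℝ)⁻¹, segPath (φ a) z t), ⟨trivial, hmem⟩, ?_⟩)
      show φ a + (t:ℝ)⁻¹ • (φ a + (t:ℝ) • (z - φ a) - φ a) = z
      match_scalars <;> (field_simp; try ring)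
  have hseg2 : ∀ t : I, segPath z (φ b) t ∉ S := by
    intro t hmem
    rcases eq_or_ne (t : ℝ) 1 with h1 | h1
    · refine hbmem (by simpa [segPath, h1] using hmem)
    · refine hzK (Or.inr ⟨((1 - (t:ℝ))⁻¹, segPath z (φ b) t), ⟨trivial, hmem⟩, ?_⟩)
      show φ b + (1-(t:ℝ))⁻¹ • (z + (t:ℝ) • (φ b - z) - φ b) = z
      have hne : 1 - (t:ℝ) ≠ 0 := by intro hc; apply h1; linarith
      match_scalars <;> (field_simp; try ring)
  set q' : Path (φ a) (φ b) := (segPath (φ a) z).trans (segPath z (φ b)) with hq'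
  have haC : φ a ∈ C := δ'.source ▸ hδ'C 0
  have hbC : φ b ∈ C := δ'.target ▸ hδ'C 1
  have hq'Cr : range q' ⊆ C := by
    rw [hq', Path.trans_range]
    rintro x (⟨s, rfl⟩ | ⟨s, rfl⟩)
    · exact segPath_mem_convex (convex_ball _ _) haC hzC s
    · exact segPath_mem_convex (convex_ball _ _) hzC hbC s
  have hq'C : ∀ t, q' t ∈ C := fun t => hq'Cr (mem_range_self t)
  have hq'S : ∀ t, q' t ∉ S := by
    have : ∀ x ∈ range q', x ∉ S := by
      rw [hq', Path.trans_range]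
      rintro x (⟨s, rfl⟩ | ⟨s, rfl⟩)
      · exact hseg1 s
      · exact hseg2 s
    exact fun t => this _ (mem_range_self t)
  -- map back to the manifold
  set q : Path a b :=
    { toFun := fun t => φ.symm (q' t)
      continuous_toFun := φ.continuousOn_symm.comp_continuous q'.continuous
        (fun t => hrsub (hq'C t))
      source' := by show φ.symm (q' 0) = a; rw [q'.source]; exact φ.left_inv (hVsub haV)
      target' := by show φ.symm (q' 1) = b; rw [q'.target]; exact φ.left_inv (hVsub hbV) } with hq
  have hqU : range q ⊆ U := by
    rintro _ ⟨t, rfl⟩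
    by_contra hcon
    have hmem : φ.symm (q' t) ∈ range e := by rw [hcodim]; exact hcon
    exact hq'S t ⟨φ.symm (q' t), ⟨hmem, φ.map_target (hrsub (hq'C t))⟩,
      φ.right_inv (hrsub (hq'C t))⟩
  refine ⟨q, hqU, ?_⟩
  -- straight-line homotopy in the chart, mapped back
  have hcomb : ∀ st : I × I, (1 - (st.1:ℝ)) • δ' st.2 + (st.1:ℝ) • q' st.2 ∈ C := by
    intro st
    exact (convex_ball _ _) (hδ'C st.2) (hq'C st.2) (sub_nonneg.2 st.1.2.2) st.1.2.1 (by ring)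
  have hHcont : Continuous (fun st : I × I =>
      φ.symm ((1 - (st.1:ℝ)) • δ' st.2 + (st.1:ℝ) • q' st.2)) := by
    refine φ.continuousOn_symm.comp_continuous ?_ (fun st => hrsub (hcomb st))
    fun_prop
  refine ⟨⟨⟨⟨fun st => φ.symm ((1 - (st.1:ℝ)) • δ' st.2 + (st.1:ℝ) • q' st.2), hHcont⟩,
    ?_, ?_⟩, ?_⟩⟩
  · intro t
    show φ.symm ((1 - ((0:I):ℝ)) • δ' t + ((0:I):ℝ) • q' t) = δ t
    norm_num
    exact φ.left_inv ((hVsub (hδ (mem_range_self t))))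
  · intro t
    show φ.symm ((1 - ((1:I):ℝ)) • δ' t + ((1:I):ℝ) • q' t) = q t
    norm_num
    rfl
  · intro s t ht
    rcases ht with h | h
    · subst h
      show φ.symm ((1 - (s:ℝ)) • δ' 0 + (s:ℝ) • q' 0) = δ 0
      rw [δ'.source, q'.source, ← add_smul]
      norm_num
      exact φ.left_inv (hVsub haV)
    · rw [mem_singleton_iff] at h
      subst h
      show φ.symm ((1 - (s:ℝ)) • δ' 1 + (s:ℝ) • q' 1) = δ 1
      rw [δ'.target, q'.target, ← add_smul]
      norm_num
      exact φ.left_inv (hVsub hbV)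


end Codim2Aux

open Codim2Aux Set

theorem pi1_surjective_of_complement_codim_two
    {n m : ℕ}
    {M : Type u} [TopologicalSpace M] [ChartedSpace (EuclideanSpace ℝ (Fin n)) M]
    [IsManifold (𝓡 n) (⊤ : ℕ∞) M]
    {N : Type u} [TopologicalSpace N] [ChartedSpace (EuclideanSpace ℝ (Fin m)) N]
    [IsManifold (𝓡 m) (⊤ : ℕ∞) N]
    (hdim : m + 2 = n)
    (U : Set M) (hU : IsOpen U) (hUc : IsClosed Uᶜ)
    (e : N → M) (he_smooth : ContMDiff (𝓡 m) (𝓡 n) (⊤ : ℕ∞) e) (he_emb : Topology.IsEmbedding e)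
    (hcodim : Set.range e = Uᶜ)
    (x : U) :
    Function.Surjective
      (inducedPi1 (⟨Subtype.val, continuous_subtype_val⟩ : C(U, M)) x) := by
  classical
  have : LocallyPathConnectedSpace M :=
    chartedSpace_locPathConnected (H := EuclideanSpace ℝ (Fin n))
  have hdense : Dense U := by
    have := dense_compl_range hdim he_smooth he_emb
    rwa [hcodim, compl_compl] at this
  have hgood : ∀ p : M, ∃ V, p ∈ V ∧ GoodSet U V :=
    exists_goodSet hdim hcodim he_smooth he_emb
  intro g
  obtain ⟨p, hp⟩ := Quotient.exists_rep (g.hom :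
    Path.Homotopic.Quotient (X := M) (↑x) (↑x))
  obtain ⟨q, hqU, hq⟩ := exists_loop_in hdense hgood x.2 p
  set q₀ : Path x x :=
    { toFun := fun t => ⟨q t, hqU (mem_range_self t)⟩
      continuous_toFun := q.continuous.subtype_mk _
      source' := Subtype.ext q.source
      target' := Subtype.ext q.target } with hq₀
  refine ⟨⟨⟦q₀⟧, Groupoid.inv ⟦q₀⟧, Groupoid.comp_inv _, Groupoid.inv_comp _⟩, ?_⟩
  apply Iso.ext
  show (πₘ (TopCat.ofHom (⟨Subtype.val, continuous_subtype_val⟩ : C(U, M)))).map ⟦q₀⟧ = g.hom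
  change (⟦q₀.map continuous_subtype_val⟧ : Path.Homotopic.Quotient (x : M) (x : M)) = _
  have hmap : q₀.map continuous_subtype_val = q := by
    ext t
    rfl
  rw [show (q₀.map (continuous_subtype_val)) = q from hmap, ← hp]
  exact Quotient.sound hq.symm
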